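/- Let Ω ⊆ ℝ³ be a bounded open set and let a, b, c : Ω → ℝ be twice continuously differentiable functions forming an orthogonal coordinate system on Ω (∇a · ∇b = ∇a · ∇c = ∇b · ∇c = 0 with Jacobian h = ∇a · (∇b × ∇c) nonvanishing on Ω) such that |∇a| = |∇b| on Ω. Let f : ℝ → ℝ be continuously differentiable. Then the vector field w = (1/√(1 + f(c)²)) ∇b + (f(c)/√(1 + f(c)²)) ∇a satisfies w × (curl w) = 0 on Ω, and curl w = σ |∇c| (f'(c)/(1 + f(c)²)) w on Ω, where σ(x) = h(x)/|h(x)| is the sign of the Jacobian; in particular w is a Beltrami field in Ω. -/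

import Mathlib

noncomputable section

abbrev R3 : Type := Fin 3 → ℝ

/-- Euclidean dot product on ℝ³. -/
def dot3 (u v : R3) : ℝ := u 0 * v 0 + u 1 * v 1 + u 2 * v 2

/-- Cross product on ℝ³. -/
def cross3 (u v : R3) : R3 :=
  ![u 1 * v 2 - u 2 * v 1, u 2 * v 0 - u 0 * v 2, u 0 * v 1 - u 1 * v 0]

/-- Euclidean norm on ℝ³. -/
def norm3 (u : R3) : ℝ := Real.sqrt (dot3 u u)

/-- Partial derivative of a scalar field in the `i`-th coordinate direction. -/
def pd (i : Fin 3) (f : R3 → ℝ) (x : R3) : ℝ := fderiv ℝ f x (Pi.single i 1)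

/-- Gradient of a scalar field. -/
def grad3 (f : R3 → ℝ) (x : R3) : R3 := fun i => pd i f x

/-- Curl of a vector field. -/
def curl3 (w : R3 → R3) (x : R3) : R3 :=
  ![pd 1 (fun y => w y 2) x - pd 2 (fun y => w y 1) x,
    pd 2 (fun y => w y 0) x - pd 0 (fun y => w y 2) x,
    pd 0 (fun y => w y 1) x - pd 1 (fun y => w y 0) x]

/-- Divergence of a vector field. -/
def div3 (w : R3 → R3) (x : R3) : ℝ :=
  pd 0 (fun y => w y 0) x + pd 1 (fun y => w y 1) x + pd 2 (fun y => w y 2) x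

/-- Laplacian of a scalar field. -/
def lap3 (f : R3 → ℝ) (x : R3) : ℝ := div3 (grad3 f) x


section BeltramiAux

lemma pd_congr' {f g : R3 → ℝ} {x : R3} (h : f =ᶠ[nhds x] g) (i : Fin 3) :
    pd i f x = pd i g x := by
  unfold pd; rw [Filter.EventuallyEq.fderiv_eq h]

lemma pd_of_hasFDerivAt' {f : R3 → ℝ} {L : R3 →L[ℝ] ℝ} {x : R3} (h : HasFDerivAt f L x)
    (i : Fin 3) : pd i f x = L (Pi.single i 1) := by
  unfold pd; rw [h.fderiv]

lemma hasFDerivAt_pd' {Ω : Set R3} (hΩ : IsOpen Ω) {b : R3 → ℝ} (hb : ContDiffOn ℝ 2 b Ω)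
    {x : R3} (hx : x ∈ Ω) (j : Fin 3) :
    HasFDerivAt (fun y => pd j b y)
      ((ContinuousLinearMap.apply ℝ ℝ (Pi.single j 1)).comp (fderiv ℝ (fderiv ℝ b) x)) x := by
  have hA : ContDiffAt ℝ 2 b x := hb.contDiffAt (hΩ.mem_nhds hx)
  have hd : DifferentiableAt ℝ (fderiv ℝ b) x :=
    (hA.fderiv_right (m := 1) (le_of_eq one_add_one_eq_two)).differentiableAt one_ne_zero
  simpa [Function.comp_def, pd] using
    (ContinuousLinearMap.apply ℝ ℝ (Pi.single j 1)).hasFDerivAt.comp x hd.hasFDerivAt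

lemma pd_pd_symm' {Ω : Set R3} (hΩ : IsOpen Ω) {a : R3 → ℝ} (ha : ContDiffOn ℝ 2 a Ω)
    {x : R3} (hx : x ∈ Ω) (i j : Fin 3) :
    pd i (fun y => pd j a y) x = pd j (fun y => pd i a y) x := by
  have hA : ContDiffAt ℝ 2 a x := ha.contDiffAt (hΩ.mem_nhds hx)
  have hsym := hA.isSymmSndFDerivAt (by rw [minSmoothness_of_isRCLikeNormedField])
  have key : ∀ k l : Fin 3, pd k (fun y => pd l a y) x
      = fderiv ℝ (fderiv ℝ a) x (Pi.single k 1) (Pi.single l 1) := by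
    intro k l
    rw [pd_of_hasFDerivAt' (hasFDerivAt_pd' hΩ ha hx l) k]; rfl
  rw [key i j, key j i, hsym]

lemma pd_w_eq' {Ω : Set R3} (hΩ : IsOpen Ω)
    {a b c : R3 → ℝ} (ha : ContDiffOn ℝ 2 a Ω) (hb : ContDiffOn ℝ 2 b Ω)
    (hc : ContDiffOn ℝ 2 c Ω) {f : ℝ → ℝ} (hf : ContDiff ℝ 1 f)
    {w : R3 → R3}
    (hw : ∀ y ∈ Ω, w y = (1 / Real.sqrt (1 + f (c y) ^ 2)) • grad3 b y +
        (f (c y) / Real.sqrt (1 + f (c y) ^ 2)) • grad3 a y)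
    {x : R3} (hx : x ∈ Ω) (i j : Fin 3) :
    pd i (fun y => w y j) x =
      (-(f (c x) * deriv f (c x)) / Real.sqrt (1 + f (c x) ^ 2) ^ 3) * pd i c x * pd j b x
      + (deriv f (c x) / Real.sqrt (1 + f (c x) ^ 2) ^ 3) * pd i c x * pd j a x
      + (Real.sqrt (1 + f (c x) ^ 2))⁻¹ * pd i (fun y => pd j b y) x
      + (f (c x) * (Real.sqrt (1 + f (c x) ^ 2))⁻¹) * pd i (fun y => pd j a y) x := by
  have h0 : (0:ℝ) < 1 + f (c x) ^ 2 := by positivity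
  have hS0 : Real.sqrt (1 + f (c x) ^ 2) ≠ 0 := by positivity
  have hsq : Real.sqrt (1 + f (c x) ^ 2) ^ 2 = 1 + f (c x) ^ 2 := Real.sq_sqrt h0.le
  have hcx : DifferentiableAt ℝ c x :=
    (hc.contDiffAt (hΩ.mem_nhds hx)).differentiableAt two_ne_zero
  have hfd : HasDerivAt f (deriv f (c x)) (c x) :=
    ((hf.differentiable one_ne_zero) (c x)).hasDerivAt
  have hinner : HasDerivAt (fun s => 1 + f s ^ 2) (2 * f (c x) * deriv f (c x)) (c x) := by
    simpa [mul_assoc] using (hfd.pow 2).const_add 1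
  have hsqrt : HasDerivAt (fun s => Real.sqrt (1 + f s ^ 2))
      (1 / (2 * Real.sqrt (1 + f (c x) ^ 2)) * (2 * f (c x) * deriv f (c x))) (c x) := by
    simpa [Function.comp_def] using (Real.hasDerivAt_sqrt h0.ne').comp (c x) hinner
  have hphi1 : HasDerivAt (fun s => (Real.sqrt (1 + f s ^ 2))⁻¹)
      (-(f (c x) * deriv f (c x)) / Real.sqrt (1 + f (c x) ^ 2) ^ 3) (c x) := by
    refine (hsqrt.inv hS0).congr_deriv ?_
    field_simp
  have hphi2 : HasDerivAt (fun s => f s * (Real.sqrt (1 + f s ^ 2))⁻¹)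
      (deriv f (c x) / Real.sqrt (1 + f (c x) ^ 2) ^ 3) (c x) := by
    refine (hfd.mul hphi1).congr_deriv ?_
    field_simp
    linear_combination (deriv f (c x)) * hsq
  have hg1 : HasFDerivAt (fun y => (Real.sqrt (1 + f (c y) ^ 2))⁻¹)
      ((-(f (c x) * deriv f (c x)) / Real.sqrt (1 + f (c x) ^ 2) ^ 3) • fderiv ℝ c x) x := by
    simpa [Function.comp_def] using hphi1.comp_hasFDerivAt x hcx.hasFDerivAt
  have hg2 : HasFDerivAt (fun y => f (c y) * (Real.sqrt (1 + f (c y) ^ 2))⁻¹)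
      ((deriv f (c x) / Real.sqrt (1 + f (c x) ^ 2) ^ 3) • fderiv ℝ c x) x := by
    simpa [Function.comp_def] using hphi2.comp_hasFDerivAt x hcx.hasFDerivAt
  have hLb := hasFDerivAt_pd' hΩ hb hx j
  have hLa := hasFDerivAt_pd' hΩ ha hx j
  have htot := (hg1.mul hLb).add (hg2.mul hLa)
  have hev : (fun y => w y j) =ᶠ[nhds x]
      (fun y => (Real.sqrt (1 + f (c y) ^ 2))⁻¹ * pd j b y
        + f (c y) * (Real.sqrt (1 + f (c y) ^ 2))⁻¹ * pd j a y) := by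
    filter_upwards [hΩ.mem_nhds hx] with y hy
    rw [hw y hy]
    simp [grad3, Pi.add_apply, Pi.smul_apply, smul_eq_mul, one_div, div_eq_mul_inv]
  rw [pd_congr' hev i, pd_of_hasFDerivAt' (f := fun y => (Real.sqrt (1 + f (c y) ^ 2))⁻¹ * pd j b y
      + f (c y) * (Real.sqrt (1 + f (c y) ^ 2))⁻¹ * pd j a y) htot i]
  have e1 : pd i (fun y => pd j b y) x =
      fderiv ℝ (fderiv ℝ b) x (Pi.single i 1) (Pi.single j 1) := by
    rw [pd_of_hasFDerivAt' hLb i]; rfl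
  have e2 : pd i (fun y => pd j a y) x =
      fderiv ℝ (fderiv ℝ a) x (Pi.single i 1) (Pi.single j 1) := by
    rw [pd_of_hasFDerivAt' hLa i]; rfl
  have e3 : fderiv ℝ c x (Pi.single i 1) = pd i c x := rfl
  simp only [ContinuousLinearMap.add_apply, ContinuousLinearMap.smul_apply,
    ContinuousLinearMap.comp_apply, ContinuousLinearMap.apply_apply, smul_eq_mul, e1, e2, e3]
  ring

lemma dot3_self_nonneg' (y : R3) : 0 ≤ dot3 y y := by
  unfold dot3
  nlinarith [sq_nonneg (y 0), sq_nonneg (y 1), sq_nonneg (y 2)]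

lemma gram3' (u v z : R3) (h1 : dot3 u v = 0) (h2 : dot3 u z = 0) (h3 : dot3 v z = 0) :
    dot3 u (cross3 v z) ^ 2 = dot3 u u * (dot3 v v * dot3 z z) := by
  simp only [dot3, cross3, Matrix.cons_val_zero, Matrix.cons_val_one, Matrix.head_cons,
    Matrix.cons_val_two, Matrix.tail_cons] at *
  linear_combination (2*(u 0*z 0+u 1*z 1+u 2*z 2)*(v 0*z 0+v 1*z 1+v 2*z 2)
      - (z 0^2+z 1^2+z 2^2)*(u 0*v 0+u 1*v 1+u 2*v 2)) * h1
    + (-(v 0^2+v 1^2+v 2^2)*(u 0*z 0+u 1*z 1+u 2*z 2)) * h2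
    + (-(u 0^2+u 1^2+u 2^2)*(v 0*z 0+v 1*z 1+v 2*z 2)) * h3

lemma crossid1' (u v z : R3) (h1 : dot3 u v = 0) (h2 : dot3 u z = 0) (i : Fin 3) :
    dot3 u u * cross3 z v i = -(dot3 u (cross3 v z)) * u i := by
  simp only [dot3] at h1 h2
  fin_cases i <;> simp [dot3, cross3]
  · linear_combination (-(u 1*z 2 - u 2*z 1)) * h1 + (u 1*v 2 - u 2*v 1) * h2
  · linear_combination (-(u 2*z 0 - u 0*z 2)) * h1 + (u 2*v 0 - u 0*v 2) * h2
  · linear_combination (-(u 0*z 1 - u 1*z 0)) * h1 + (u 0*v 1 - u 1*v 0) * h2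

lemma crossid2' (u v z : R3) (h1 : dot3 u v = 0) (h3 : dot3 v z = 0) (i : Fin 3) :
    dot3 v v * cross3 z u i = dot3 u (cross3 v z) * v i := by
  simp only [dot3] at h1 h3
  fin_cases i <;> simp [dot3, cross3]
  · linear_combination (-(v 1*z 2 - v 2*z 1)) * h1 + (v 1*u 2 - v 2*u 1) * h3
  · linear_combination (-(v 2*z 0 - v 0*z 2)) * h1 + (v 2*u 0 - v 0*u 2) * h3
  · linear_combination (-(v 0*z 1 - v 1*z 0)) * h1 + (v 0*u 1 - v 1*u 0) * h3

lemma cross_smul_self' (y : R3) (r : ℝ) : cross3 y (r • y) = 0 := by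
  funext i
  fin_cases i <;> simp [cross3, Pi.smul_apply, smul_eq_mul] <;> ring

lemma curl_w_eq' {Ω : Set R3} (hΩ : IsOpen Ω)
    {a b c : R3 → ℝ} (ha : ContDiffOn ℝ 2 a Ω) (hb : ContDiffOn ℝ 2 b Ω)
    (hc : ContDiffOn ℝ 2 c Ω) {f : ℝ → ℝ} (hf : ContDiff ℝ 1 f)
    {w : R3 → R3}
    (hw : ∀ y ∈ Ω, w y = (1 / Real.sqrt (1 + f (c y) ^ 2)) • grad3 b y +
        (f (c y) / Real.sqrt (1 + f (c y) ^ 2)) • grad3 a y)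
    {x : R3} (hx : x ∈ Ω) (i : Fin 3) :
    curl3 w x i =
      (-(f (c x) * deriv f (c x)) / Real.sqrt (1 + f (c x) ^ 2) ^ 3)
        * cross3 (grad3 c x) (grad3 b x) i
      + (deriv f (c x) / Real.sqrt (1 + f (c x) ^ 2) ^ 3)
        * cross3 (grad3 c x) (grad3 a x) i := by
  fin_cases i
  · simp only [curl3, cross3, grad3, Fin.zero_eta, Matrix.cons_val_zero]
    rw [pd_w_eq' hΩ ha hb hc hf hw hx 1 2, pd_w_eq' hΩ ha hb hc hf hw hx 2 1,
      pd_pd_symm' hΩ hb hx 1 2, pd_pd_symm' hΩ ha hx 1 2]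
    ring
  · simp only [curl3, cross3, grad3, Fin.mk_one, Matrix.cons_val_one, Matrix.head_cons, Matrix.cons_val_zero]
    rw [pd_w_eq' hΩ ha hb hc hf hw hx 2 0, pd_w_eq' hΩ ha hb hc hf hw hx 0 2,
      pd_pd_symm' hΩ hb hx 2 0, pd_pd_symm' hΩ ha hx 2 0]
    ring
  · simp only [curl3, cross3, grad3, show (⟨2,by norm_num⟩ : Fin 3) = 2 from rfl,
      Matrix.cons_val_two, Matrix.tail_cons, Matrix.head_cons]
    rw [pd_w_eq' hΩ ha hb hc hf hw hx 0 1, pd_w_eq' hΩ ha hb hc hf hw hx 1 0,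
      pd_pd_symm' hΩ hb hx 0 1, pd_pd_symm' hΩ ha hx 0 1]
    ring

end BeltramiAux

/-- Beltrami field obtained from an orthogonal coordinate system `(a, b, c)` with
`|∇a| = |∇b|` and a C¹ function `f` of the coordinate `c`. -/
theorem beltrami_construction_arctan
    (Ω : Set R3) (hΩopen : IsOpen Ω) (hΩbdd : Bornology.IsBounded Ω)
    (a b c : R3 → ℝ)
    (ha : ContDiffOn ℝ 2 a Ω) (hb : ContDiffOn ℝ 2 b Ω) (hc : ContDiffOn ℝ 2 c Ω)
    (horth1 : ∀ x ∈ Ω, dot3 (grad3 a x) (grad3 b x) = 0)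
    (horth2 : ∀ x ∈ Ω, dot3 (grad3 a x) (grad3 c x) = 0)
    (horth3 : ∀ x ∈ Ω, dot3 (grad3 b x) (grad3 c x) = 0)
    (hjac : ∀ x ∈ Ω, dot3 (grad3 a x) (cross3 (grad3 b x) (grad3 c x)) ≠ 0)
    (hnorm : ∀ x ∈ Ω, norm3 (grad3 a x) = norm3 (grad3 b x))
    (f : ℝ → ℝ) (hf : ContDiff ℝ 1 f)
    (w : R3 → R3)
    (hw : ∀ x ∈ Ω,
      w x = (1 / Real.sqrt (1 + f (c x) ^ 2)) • grad3 b x +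
        (f (c x) / Real.sqrt (1 + f (c x) ^ 2)) • grad3 a x) :
    ∀ x ∈ Ω,
      cross3 (w x) (curl3 w x) = 0 ∧
      curl3 w x =
        ((dot3 (grad3 a x) (cross3 (grad3 b x) (grad3 c x)) /
            |dot3 (grad3 a x) (cross3 (grad3 b x) (grad3 c x))|) *
          norm3 (grad3 c x) * (deriv f (c x) / (1 + f (c x) ^ 2))) • w x := by
  intro x hx
  set u := grad3 a x with hu
  set v := grad3 b x with hv
  set z := grad3 c x with hz
  set h := dot3 u (cross3 v z) with hh
  have hhne : h ≠ 0 := hjac x hx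
  have h0 : (0:ℝ) < 1 + f (c x) ^ 2 := by positivity
  have hS0 : Real.sqrt (1 + f (c x) ^ 2) ≠ 0 := by positivity
  have hgram : h ^ 2 = dot3 u u * (dot3 v v * dot3 z z) :=
    gram3' u v z (horth1 x hx) (horth2 x hx) (horth3 x hx)
  have h2pos : 0 < h ^ 2 := by positivity
  have hu0 := dot3_self_nonneg' u
  have hv0 := dot3_self_nonneg' v
  have hz0 := dot3_self_nonneg' z
  have huu : 0 < dot3 u u := by nlinarith [mul_nonneg hv0 hz0]
  have hvv : 0 < dot3 v v := by nlinarith [mul_nonneg hu0 hz0]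
  have hzz : 0 < dot3 z z := by nlinarith [mul_nonneg hu0 hv0]
  have hZ : (0:ℝ) < Real.sqrt (dot3 z z) := Real.sqrt_pos.mpr hzz
  have huv : dot3 u u = dot3 v v := by
    have e : Real.sqrt (dot3 u u) = Real.sqrt (dot3 v v) := hnorm x hx
    rw [← Real.sq_sqrt hu0, e, Real.sq_sqrt hv0]
  have habs : |h| = dot3 v v * Real.sqrt (dot3 z z) := by
    rw [← Real.sqrt_sq_eq_abs, hgram, huv,
      show dot3 v v * (dot3 v v * dot3 z z) = dot3 v v ^ 2 * dot3 z z by ring,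
      Real.sqrt_mul (sq_nonneg _), Real.sqrt_sq hvv.le]
  have key : curl3 w x =
      ((h / |h|) * norm3 z * (deriv f (c x) / (1 + f (c x) ^ 2))) • w x := by
    funext i
    rw [Pi.smul_apply, smul_eq_mul]
    rw [curl_w_eq' hΩopen ha hb hc hf hw hx i]
    have e1 : cross3 z v i = -h * u i / dot3 u u :=
      (eq_div_iff huu.ne').mpr
        (by rw [mul_comm]; exact crossid1' u v z (horth1 x hx) (horth2 x hx) i)
    have e2 : cross3 z u i = h * v i / dot3 v v :=
      (eq_div_iff hvv.ne').mpr
        (by rw [mul_comm]; exact crossid2' u v z (horth1 x hx) (horth3 x hx) i)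
    have e3 : w x i = (1 / Real.sqrt (1 + f (c x) ^ 2)) * v i
        + (f (c x) / Real.sqrt (1 + f (c x) ^ 2)) * u i := by
      rw [hw x hx]; simp [Pi.add_apply, Pi.smul_apply, smul_eq_mul]; rfl
    have hsq : Real.sqrt (1 + f (c x) ^ 2) ^ 2 = 1 + f (c x) ^ 2 := Real.sq_sqrt h0.le
    rw [e1, e2, e3, habs, huv, show norm3 z = Real.sqrt (dot3 z z) from rfl, ← hsq]
    field_simp
    rw [Real.sq_sqrt (sq_nonneg (Real.sqrt (1 + f (c x) ^ 2)))]
    ring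
  refine ⟨?_, key⟩
  rw [key]
  exact cross_smul_self' _ _
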